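/- In Σ⁴_q with 0 < q < 1, every irreducible bounded *-representation ρ satisfies: there is a unit vector |λ⟩ with ρ(R)|λ⟩ = λ|λ⟩, ρ(a)|λ⟩ = ρ(b*)|λ⟩ = 0, and λ ∈ {0,1}. In particular, if ρ is the one-dimensional representation then ρ(a)=ρ(b)=ρ(R)=0. -/

import Mathlib

open ContinuousLinearMap

lemma twisted_cfc_comm {H : Type*} [NormedAddCommGroup H] [InnerProductSpace ℂ H]
    [CompleteSpace H] (R T : H →L[ℂ] H) (hR : IsSelfAdjoint R)
    (hspec : spectrum ℝ R ⊆ Set.Icc (0:ℝ) 1)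
    (c : ℝ) (hc0 : 0 ≤ c) (hc1 : c ≤ 1)
    (hTR : T * R = c • (R * T))
    (f : ℝ → ℝ) (hf : Continuous f) :
    T * cfc f R = cfc (fun x => f (c * x)) R * T := by
  set σ := spectrum ℝ R with hσ
  set K : Set ℝ := Set.Icc (0:ℝ) 1 with hK
  have hmem : ∀ x : σ, (x : ℝ) ∈ K := fun x => hspec x.2
  have hmem2 : ∀ x : σ, c * (x : ℝ) ∈ K := by
    intro x
    obtain ⟨h1, h2⟩ := hspec x.2
    exact ⟨mul_nonneg hc0 h1, by nlinarith⟩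
  let ι : C(σ, K) := ⟨fun x => ⟨x, hmem x⟩, (continuous_subtype_val).subtype_mk _⟩
  let ι2 : C(σ, K) := ⟨fun x => ⟨c * x, hmem2 x⟩,
    (continuous_const.mul continuous_subtype_val).subtype_mk _⟩
  let Z : Subalgebra ℝ C(K, ℝ) :=
  { carrier := {g | T * cfcHom hR (g.comp ι) = cfcHom hR (g.comp ι2) * T}
    mul_mem' := by
      intro g h hg hh
      simp only [Set.mem_setOf_eq, ContinuousMap.mul_comp, map_mul] at *
      rw [← mul_assoc, hg, mul_assoc, hh, mul_assoc]
    add_mem' := by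
      intro g h hg hh
      simp only [Set.mem_setOf_eq, ContinuousMap.add_comp, map_add] at *
      rw [mul_add, hg, hh, add_mul]
    one_mem' := by
      simp only [Set.mem_setOf_eq, ContinuousMap.one_comp, map_one, mul_one, one_mul]
    algebraMap_mem' := by
      intro r
      show T * cfcHom hR (((algebraMap ℝ C(K, ℝ)) r).comp ι)
          = cfcHom hR (((algebraMap ℝ C(K, ℝ)) r).comp ι2) * T
      have h1 : (algebraMap ℝ C(K, ℝ) r).comp ι = algebraMap ℝ C(σ, ℝ) r := by
        ext x; rfl
      have h2 : (algebraMap ℝ C(K, ℝ) r).comp ι2 = algebraMap ℝ C(σ, ℝ) r := by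
        ext x; rfl
      rw [h1, h2, AlgHomClass.commutes]
      exact (Algebra.commutes r T).symm }
  have hZc : IsClosed (Z : Set C(K, ℝ)) := by
    have h1 : Continuous fun g : C(K, ℝ) => T * cfcHom hR (g.comp ι) :=
      continuous_const.mul ((cfcHom_continuous hR).comp (ContinuousMap.continuous_precomp ι))
    have h2 : Continuous fun g : C(K, ℝ) => cfcHom hR (g.comp ι2) * T :=
      ((cfcHom_continuous hR).comp (ContinuousMap.continuous_precomp ι2)).mul continuous_const
    exact isClosed_eq h1 h2
  have hX : (Polynomial.toContinuousMapOnAlgHom K Polynomial.X) ∈ Z := by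
    show T * cfcHom hR _ = cfcHom hR _ * T
    have h1 : (Polynomial.toContinuousMapOnAlgHom K Polynomial.X).comp ι
        = (ContinuousMap.id ℝ).restrict σ := by
      ext x
      simp [ι]
    have h2 : (Polynomial.toContinuousMapOnAlgHom K Polynomial.X).comp ι2
        = c • ((ContinuousMap.id ℝ).restrict σ) := by
      ext x
      simp [ι2]
    rw [h1, h2, map_smul, cfcHom_id hR, smul_mul_assoc]
    exact hTR
  have hZtop : ∀ g : C(K, ℝ), g ∈ Z := by
    have hle : polynomialFunctions K ≤ Z := by
      rw [polynomialFunctions.eq_adjoin_X]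
      exact Algebra.adjoin_le (Set.singleton_subset_iff.mpr hX)
    have hcl := Subalgebra.topologicalClosure_minimal hle hZc
    have htop : (polynomialFunctions K).topologicalClosure = ⊤ :=
      polynomialFunctions_closure_eq_top 0 1
    rw [htop] at hcl
    exact fun g => hcl (by trivial)
  let g : C(K, ℝ) := ⟨fun x => f x, hf.comp continuous_subtype_val⟩
  have hg := hZtop g
  have e1 : cfc f R = cfcHom hR (g.comp ι) := by
    rw [cfc_apply f R hR (hf.continuousOn)]
    exact congrArg _ (by ext x; rfl)
  have e2 : cfc (fun x => f (c * x)) R = cfcHom hR (g.comp ι2) := by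
    rw [cfc_apply (fun x => f (c * x)) R hR
      ((hf.comp (continuous_const.mul continuous_id)).continuousOn)]
    exact congrArg _ (by ext x; rfl)
  rw [e1, e2]
  exact hg

set_option maxHeartbeats 1000000 in
theorem irreducible_representation_eigenvector
    (q : ℝ) (hq0 : 0 < q) (hq1 : q < 1)
    (H : Type*) [NormedAddCommGroup H] [InnerProductSpace ℂ H] [CompleteSpace H]
    [Nontrivial H]
    (ρa ρb ρR : H →L[ℂ] H)
    (hRsa : adjoint ρR = ρR)
    (rel1 : ρR * ρa = ((q : ℂ) ^ 2)⁻¹ • (ρa * ρR))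
    (rel2 : ρR * ρb = ((q : ℂ) ^ 2) • (ρb * ρR))
    (rel3 : ρa * ρb = ((q : ℂ) ^ 3) • (ρb * ρa))
    (rel4 : ρa * adjoint ρb = ((q : ℂ))⁻¹ • (adjoint ρb * ρa))
    (rel5 : ρa * adjoint ρa + ((q : ℂ) ^ 2) • (ρb * adjoint ρb) =
      ρR * (1 - ((q : ℂ) ^ 2) • ρR))
    (rel6 : ρa * adjoint ρa = ((q : ℂ) ^ 2) • (adjoint ρa * ρa) +
      ((1 : ℂ) - (q : ℂ) ^ 2) • (ρR * ρR))
    (rel7 : adjoint ρb * ρb = ((q : ℂ) ^ 4) • (ρb * adjoint ρb) +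
      ((1 : ℂ) - (q : ℂ) ^ 2) • ρR)
    (hirr : ∀ V : Submodule ℂ H, IsClosed (V : Set H) →
      (∀ v ∈ V, ρa v ∈ V ∧ ρb v ∈ V ∧ ρR v ∈ V ∧
        adjoint ρa v ∈ V ∧ adjoint ρb v ∈ V) → V = ⊥ ∨ V = ⊤) :
    (∃ (v : H) (lam : ℝ), ‖v‖ = 1 ∧ ρR v = (lam : ℂ) • v ∧
      ρa v = 0 ∧ (adjoint ρb) v = 0 ∧ (lam = 0 ∨ lam = 1)) ∧
    (Module.finrank ℂ H = 1 → ρa = 0 ∧ ρb = 0 ∧ ρR = 0) := by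
  have hqC : (q : ℂ) ≠ 0 := by
    simpa using fun h => absurd h (ne_of_gt hq0)
  have hR' : IsSelfAdjoint ρR := (star_eq_adjoint ρR).trans hRsa
  -- scalar conversion
  have hcoe : ((q : ℂ) ^ 2) = algebraMap ℝ ℂ (q ^ 2) := by
    push_cast
    rfl
  -- twisted commutation hypotheses in ℝ-smul form
  have h_aR : ρa * ρR = (q ^ 2 : ℝ) • (ρR * ρa) := by
    have h : (q : ℂ)^2 • (ρR * ρa) = ρa * ρR := by
      rw [rel1, smul_smul, mul_inv_cancel₀ (pow_ne_zero 2 hqC), one_smul]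
    rw [← h, hcoe, algebraMap_smul]
  have h_bR : adjoint ρb * ρR = (q ^ 2 : ℝ) • (ρR * adjoint ρb) := by
    have h := congrArg (star ·) rel2
    simp only [star_mul, star_smul] at h
    rw [star_eq_adjoint, star_eq_adjoint, hRsa] at h
    have hstq : star ((q:ℂ)^2) = (q:ℂ)^2 := by
      simp [← Complex.ofReal_pow, Complex.star_def, Complex.conj_ofReal]
    rw [hstq] at h
    rw [h, hcoe, algebraMap_smul]
  -- the key positivity identity
  set Aq : H →L[ℂ] H := (q : ℂ) • ρa with hAq
  set Bq : H →L[ℂ] H := (q : ℂ) • ρb with hBq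
  have e_a : star Aq * Aq = (q:ℂ)^2 • (adjoint ρa * ρa) := by
    rw [hAq, star_smul, star_eq_adjoint, smul_mul_smul_comm]
    congr 1
    simp [Complex.star_def, Complex.conj_ofReal, sq]
  have e_b : Bq * star Bq = (q:ℂ)^2 • (ρb * adjoint ρb) := by
    rw [hBq, star_smul, star_eq_adjoint, smul_mul_smul_comm]
    congr 1
    simp [Complex.star_def, Complex.conj_ofReal, sq]
  have rel5' : ρa * adjoint ρa + ((q:ℂ)^2) • (ρb * adjoint ρb)
      = ρR - ((q:ℂ)^2) • (ρR * ρR) := by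
    rw [rel5, mul_sub, mul_one, mul_smul_comm]
  have key' : ρR - ρR * ρR
      = (q:ℂ)^2 • (adjoint ρa * ρa) + (q:ℂ)^2 • (ρb * adjoint ρb) := by
    calc ρR - ρR * ρR
        = (ρR - (q:ℂ)^2 • (ρR * ρR)) - ((1:ℂ) - (q:ℂ)^2) • (ρR * ρR) := by
          match_scalars <;> ring
      _ = (ρa * adjoint ρa + ((q:ℂ)^2) • (ρb * adjoint ρb))
            - ((1:ℂ) - (q:ℂ)^2) • (ρR * ρR) := by rw [rel5']
      _ = ((q:ℂ)^2 • (adjoint ρa * ρa) + ((1:ℂ) - (q:ℂ)^2) • (ρR * ρR)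
            + ((q:ℂ)^2) • (ρb * adjoint ρb)) - ((1:ℂ) - (q:ℂ)^2) • (ρR * ρR) := by
          rw [rel6]
      _ = (q:ℂ)^2 • (adjoint ρa * ρa) + (q:ℂ)^2 • (ρb * adjoint ρb) := by
          abel
  have key2 : ρR - ρR * ρR = star Aq * Aq + Bq * star Bq := by
    rw [e_a, e_b, key']
  have hpos : (0 : H →L[ℂ] H) ≤ ρR - ρR * ρR := by
    rw [key2]
    exact add_nonneg (star_mul_self_nonneg _) (mul_star_self_nonneg _)
  -- spectrum of ρR is contained in [0,1]
  have hcfc_sub : cfc (fun t : ℝ => t - t^2) ρR = ρR - ρR * ρR := by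
    rw [cfc_sub (fun t : ℝ => t) (fun t : ℝ => t^2) ρR, cfc_id' ℝ ρR, cfc_pow_id ρR 2, sq]
  have hspec : spectrum ℝ ρR ⊆ Set.Icc (0:ℝ) 1 := by
    intro x hx
    have h1 : x - x^2 ∈ spectrum ℝ (ρR - ρR * ρR) := by
      rw [← hcfc_sub, cfc_map_spectrum (fun t : ℝ => t - t^2) ρR]
      exact ⟨x, hx, rfl⟩
    have h2 := spectrum_nonneg_of_nonneg hpos h1
    constructor <;> nlinarith [sq_nonneg x, sq_nonneg (x - 1)]
  -- the kernel trick
  have star_Bq_apply : ∀ u : H, star Bq u = (q:ℂ) • (adjoint ρb u) := by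
    intro u
    rw [hBq, star_smul, star_eq_adjoint]
    simp [Complex.star_def, Complex.conj_ofReal]
  have hkill : ∀ u : H, ρa u = 0 → adjoint ρb u = 0 → ρR u - ρR (ρR u) = 0 := by
    intro u hau hbu
    have h := DFunLike.congr_fun key2 u
    simp only [sub_apply, ContinuousLinearMap.mul_apply, add_apply] at h
    rw [h]
    have h1 : Aq u = 0 := by rw [hAq]; simp [hau]
    have h2 : star Bq u = 0 := by rw [star_Bq_apply u, hbu, smul_zero]
    rw [h1, h2, map_zero, map_zero, add_zero]
  -- normalization helper
  have normalize : ∀ (u : H) (lam : ℝ), u ≠ 0 → ρR u = (lam:ℂ) • u → ρa u = 0 →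
      adjoint ρb u = 0 → (lam = 0 ∨ lam = 1) →
      (∃ (v : H) (lam' : ℝ), ‖v‖ = 1 ∧ ρR v = (lam' : ℂ) • v ∧
        ρa v = 0 ∧ (adjoint ρb) v = 0 ∧ (lam' = 0 ∨ lam' = 1)) := by
    intro u lam hu hRu hau hbu hlam
    have hnu : ‖u‖ ≠ 0 := norm_ne_zero_iff.mpr hu
    refine ⟨(‖u‖ : ℂ)⁻¹ • u, lam, ?_, ?_, ?_, ?_, hlam⟩
    · rw [norm_smul, norm_inv, Complex.norm_real, Real.norm_eq_abs,
        abs_of_nonneg (norm_nonneg u), inv_mul_cancel₀ hnu]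
    · rw [map_smul, hRu, smul_comm]
    · rw [map_smul, hau, smul_zero]
    · rw [map_smul, hbu, smul_zero]
  have hA : Nontrivial (H →L[ℂ] H) := inferInstance
  have hne : (spectrum ℝ ρR).Nonempty := hR'.spectrum_nonempty
  have hcpt : IsCompact (spectrum ℝ ρR) := spectrum.isCompact ρR
  set μ : ℝ := sSup (spectrum ℝ ρR) with hμ
  have hμmem : μ ∈ spectrum ℝ ρR := hcpt.sSup_mem hne
  have hub : ∀ x ∈ spectrum ℝ ρR, x ≤ μ := fun x hx => le_csSup hcpt.bddAbove hx
  have hex : ∃ (v : H) (lam : ℝ), ‖v‖ = 1 ∧ ρR v = (lam : ℂ) • v ∧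
      ρa v = 0 ∧ (adjoint ρb) v = 0 ∧ (lam = 0 ∨ lam = 1) := by
    rcases eq_or_lt_of_le (hspec hμmem).1 with hμ0 | hμpos
    · -- μ = 0 : ρR = 0
      have hR0 : ρR = 0 := by
        have heq : cfc (fun x : ℝ => x) ρR = cfc (fun _ : ℝ => (0:ℝ)) ρR := by
          apply cfc_congr
          intro x hx
          have h1 := hub x hx
          have h2 := (hspec hx).1
          rw [← hμ0] at h1
          exact le_antisymm h1 h2
        rw [cfc_id' ℝ ρR] at heq
        rw [heq, show (fun _ : ℝ => (0:ℝ)) = (0 : ℝ → ℝ) from rfl, cfc_zero]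
      -- everything vanishes pointwise
      have hzero : ∀ u : H, ρa u = 0 ∧ adjoint ρb u = 0 := by
        intro u
        have h : (0:H) = (star Aq) (Aq u) + Bq ((star Bq) u) := by
          have h0 := DFunLike.congr_fun key2 u
          rw [hR0] at h0
          simpa using h0
        have hinner : (0:ℂ) = inner ℂ u ((star Aq) (Aq u)) + inner ℂ u (Bq ((star Bq) u)) := by
          have h2 := congrArg (fun w => (inner ℂ u w : ℂ)) h
          simpa [inner_add_right] using h2
        have hi1 : (inner ℂ u ((star Aq) (Aq u)) : ℂ) = ((‖Aq u‖ : ℝ) : ℂ)^2 := by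
          rw [star_eq_adjoint, adjoint_inner_right]
          exact inner_self_eq_norm_sq_to_K _
        have hi2 : (inner ℂ u (Bq ((star Bq) u)) : ℂ) = ((‖(star Bq) u‖ : ℝ) : ℂ)^2 := by
          have he : (inner ℂ u (Bq ((star Bq) u)) : ℂ)
              = inner ℂ ((star Bq) u) ((star Bq) u) := by
            rw [← adjoint_inner_left, ← star_eq_adjoint]
          rw [he]
          exact inner_self_eq_norm_sq_to_K _
        have hsum : (0:ℂ) = ((‖Aq u‖ : ℝ) : ℂ)^2 + ((‖(star Bq) u‖ : ℝ) : ℂ)^2 := by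
          rw [hinner, hi1, hi2]
        have hre : (0:ℝ) = ‖Aq u‖^2 + ‖(star Bq) u‖^2 := by exact_mod_cast hsum
        have hAqu : ‖Aq u‖ = 0 := by nlinarith [norm_nonneg (Aq u), norm_nonneg ((star Bq) u)]
        have hBqu : ‖(star Bq) u‖ = 0 := by
          nlinarith [norm_nonneg (Aq u), norm_nonneg ((star Bq) u)]
        have h1 : Aq u = 0 := norm_eq_zero.mp hAqu
        have h2 : (star Bq) u = 0 := norm_eq_zero.mp hBqu
        rw [hAq] at h1
        simp only [smul_apply, smul_eq_zero, hqC, false_or] at h1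
        rw [star_Bq_apply u, smul_eq_zero] at h2
        exact ⟨h1, h2.resolve_left hqC⟩
      obtain ⟨v0, hv0⟩ := exists_ne (0 : H)
      exact normalize v0 0 hv0 (by simp [hR0]) (hzero v0).1 (hzero v0).2 (Or.inl rfl)
    · -- μ > 0
      set f : ℝ → ℝ := fun x => max (x - q^2 * μ) 0 with hf_def
      have hf : Continuous f := (continuous_id.sub continuous_const).max continuous_const
      set N : H →L[ℂ] H := cfc f ρR with hN
      have hzero_side : cfc (fun x => f (q^2 * x)) ρR = 0 := by
        have : cfc (fun x => f (q^2 * x)) ρR = cfc (fun _ : ℝ => (0:ℝ)) ρR := by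
          apply cfc_congr
          intro x hx
          have hx1 := hub x hx
          simp only [hf_def]
          apply max_eq_right
          nlinarith
        rw [this, show (fun _ : ℝ => (0:ℝ)) = (0 : ℝ → ℝ) from rfl, cfc_zero]
      have hNa : ρa * N = 0 := by
        rw [hN, twisted_cfc_comm ρR ρa hR' hspec (q^2) (by positivity) (by nlinarith [mul_lt_mul_of_pos_left hq1 hq0])
          h_aR f hf, hzero_side, zero_mul]
      have hNb : adjoint ρb * N = 0 := by
        rw [hN, twisted_cfc_comm ρR (adjoint ρb) hR' hspec (q^2) (by positivity)
          (by nlinarith [mul_lt_mul_of_pos_left hq1 hq0]) h_bR f hf, hzero_side, zero_mul]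
      have hNne : N ≠ 0 := by
        intro h0
        have hfμ : f μ = μ - q^2 * μ := max_eq_left (by nlinarith [mul_pos (mul_pos hq0 hq0) hμpos, mul_lt_mul_of_pos_right (mul_lt_mul_of_pos_left hq1 hq0) hμpos])
        have hmem : f μ ∈ spectrum ℝ N := by
          rw [hN, cfc_map_spectrum f ρR]
          exact ⟨μ, hμmem, rfl⟩
        rw [h0, spectrum.zero_eq] at hmem
        simp only [Set.mem_singleton_iff] at hmem
        rw [hfμ] at hmem
        nlinarith [mul_lt_mul_of_pos_right (mul_lt_mul_of_pos_left hq1 hq0) hμpos]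
      have hw : ∃ w : H, N w ≠ 0 := by
        by_contra hcon
        push_neg at hcon
        exact hNne (by ext w; simpa using hcon w)
      obtain ⟨w, hw⟩ := hw
      set u₀ : H := N w with hu₀
      have ha0 : ρa u₀ = 0 := by
        have := DFunLike.congr_fun hNa w
        simpa [ContinuousLinearMap.mul_apply] using this
      have hb0 : adjoint ρb u₀ = 0 := by
        have := DFunLike.congr_fun hNb w
        simpa [ContinuousLinearMap.mul_apply] using this
      have hfix := hkill u₀ ha0 hb0
      rcases eq_or_ne (ρR u₀) 0 with hc | hc
      · exact normalize u₀ 0 hw (by simp [hc]) ha0 hb0 (Or.inl rfl)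
      · set u₁ : H := ρR u₀ with hu₁
        have hRu₁ : ρR u₁ = ((1:ℝ):ℂ) • u₁ := by
          rw [hu₁]
          have := sub_eq_zero.mp hfix
          push_cast
          rw [one_smul, ← this]
        have ha1 : ρa u₁ = 0 := by
          have := DFunLike.congr_fun h_aR u₀
          simp only [ContinuousLinearMap.mul_apply, smul_apply] at this
          rw [hu₁, this, ha0, map_zero, smul_zero]
        have hb1 : adjoint ρb u₁ = 0 := by
          have := DFunLike.congr_fun h_bR u₀
          simp only [ContinuousLinearMap.mul_apply, smul_apply] at this
          rw [hu₁, this, hb0, map_zero, smul_zero]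
        exact normalize u₁ 1 hc hRu₁ ha1 hb1 (Or.inr rfl)
  refine ⟨hex, ?_⟩
  -- one-dimensional case
  intro hdim
  obtain ⟨v, lam, hv1, hvR, hva, hvb, hlam⟩ := hex
  have hvne : v ≠ 0 := by
    intro h
    rw [h, norm_zero] at hv1
    norm_num at hv1
  have hspan := (finrank_eq_one_iff_of_nonzero' v hvne).mp hdim
  have ha0 : ρa = 0 := by
    ext w
    obtain ⟨cw, hcw⟩ := hspan w
    rw [← hcw, map_smul, hva, smul_zero, zero_apply]
  have hbv : ρb v = 0 := by
    obtain ⟨d, hd⟩ := hspan (ρb v)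
    have hinner : (inner ℂ v (ρb v) : ℂ) = 0 := by
      rw [← adjoint_inner_left, hvb, inner_zero_left]
    rw [← hd, inner_smul_right] at hinner
    have hvv : (inner ℂ v v : ℂ) = 1 := by
      rw [inner_self_eq_norm_sq_to_K, hv1]
      simp
    rw [hvv, mul_one] at hinner
    rw [← hd, hinner, zero_smul]
  have hb0 : ρb = 0 := by
    ext w
    obtain ⟨cw, hcw⟩ := hspan w
    rw [← hcw, map_smul, hbv, smul_zero, zero_apply]
  have hlam0 : lam = 0 := by
    rcases hlam with h | h
    · exact h
    · exfalso
      rw [ha0, hb0] at rel5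
      simp only [zero_mul, smul_zero, add_zero] at rel5
      have h5 := DFunLike.congr_fun rel5.symm v
      simp only [ContinuousLinearMap.mul_apply, sub_apply, one_apply, smul_apply,
        zero_apply, map_sub, map_smul, id_eq] at h5
      rw [hvR, h, map_smul, hvR, h] at h5
      push_cast at h5
      simp only [one_smul, smul_smul, mul_one] at h5
      have : ((1:ℂ) - (q:ℂ)^2) • v = 0 := by
        rw [sub_smul, one_smul]
        convert h5 using 2
        simp [hvR, h]
      rcases smul_eq_zero.mp this with hcoef | hv
      · have : (q:ℂ)^2 = 1 := by linear_combination -hcoef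
        have hq2 : q^2 = 1 := by exact_mod_cast this
        nlinarith
      · exact hvne hv
  have hR0 : ρR = 0 := by
    ext w
    obtain ⟨cw, hcw⟩ := hspan w
    rw [← hcw, map_smul, hvR, hlam0]
    simp
  exact ⟨ha0, hb0, hR0⟩
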